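/- For every graph G with at least one vertex, there exists a vertex v of G such that avi(G - v) < avi(G), where avi denotes the average size of independent vertex sets. -/

import Mathlib

open Finset
open scoped Classical

/-- The finite set of independent vertex sets of `G` (including the empty set). -/
noncomputable def indepSets {V : Type*} [Fintype V] (G : SimpleGraph V) : Finset (Finset V) :=
  univ.filter fun s => ∀ u ∈ s, ∀ v ∈ s, ¬ G.Adj u v

/-- `I(G)`: the number of independent vertex sets of `G`. -/
noncomputable def numIndep {V : Type*} [Fintype V] (G : SimpleGraph V) : ℕ :=
  (indepSets G).card

/-- `T(G)`: the sum of the sizes of all independent vertex sets of `G`. -/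
noncomputable def totIndep {V : Type*} [Fintype V] (G : SimpleGraph V) : ℕ :=
  ∑ s ∈ indepSets G, s.card

/-- `avi(G) = T(G)/I(G)`: the average size of an independent vertex set of `G`. -/
noncomputable def avi {V : Type*} [Fintype V] (G : SimpleGraph V) : ℝ :=
  (totIndep G : ℝ) / (numIndep G : ℝ)

lemma aux_image {V : Type*} [Fintype V] (G : SimpleGraph V) (v : V) :
    (indepSets (G.induce {u | u ≠ v})).image
      (fun s => s.map (Function.Embedding.subtype _)) =
    (indepSets G).filter (fun s => v ∉ s) := by
  ext S
  simp only [mem_image, mem_filter, indepSets, mem_filter, mem_univ, true_and]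
  constructor
  · rintro ⟨s, hs, rfl⟩
    refine ⟨?_, ?_⟩
    · intro u hu w hw
      simp only [Finset.mem_map, Function.Embedding.coe_subtype] at hu hw
      obtain ⟨a, ha, rfl⟩ := hu
      obtain ⟨b, hb, rfl⟩ := hw
      exact fun h => hs a ha b hb (by simpa using h)
    · intro hv
      simp only [Finset.mem_map, Function.Embedding.coe_subtype] at hv
      obtain ⟨a, _, ha⟩ := hv
      exact a.2 ha
  · rintro ⟨hS, hv⟩
    refine ⟨S.subtype (· ≠ v), ?_, ?_⟩
    · intro a ha b hb
      simp only [Finset.mem_subtype] at ha hb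
      intro h
      exact hS a ha b hb (by simpa using h)
    · exact Finset.subtype_map_of_mem (fun x hx => fun h => hv (h ▸ hx))

lemma aux_numIndep {V : Type*} [Fintype V] (G : SimpleGraph V) (v : V) :
    numIndep (G.induce {u | u ≠ v}) = ((indepSets G).filter (fun s => v ∉ s)).card := by
  rw [numIndep, ← aux_image G v,
    Finset.card_image_of_injective _ (Finset.map_injective _)]

lemma aux_totIndep {V : Type*} [Fintype V] (G : SimpleGraph V) (v : V) :
    totIndep (G.induce {u | u ≠ v}) = ∑ s ∈ (indepSets G).filter (fun s => v ∉ s), s.card := by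
  rw [totIndep, ← aux_image G v, Finset.sum_image
    (fun a _ b _ h => Finset.map_injective _ h)]
  simp [Finset.card_map]

lemma dbl_sum {α : Type*} (s : Finset α) (f : α → ℝ) :
    ∑ a ∈ s, ∑ b ∈ s, (f a - f b)^2
      = 2 * s.card * (∑ a ∈ s, f a ^ 2) - 2 * (∑ a ∈ s, f a)^2 := by
  simp only [sub_sq]
  simp only [Finset.sum_add_distrib, Finset.sum_sub_distrib, ← Finset.mul_sum,
    ← Finset.sum_mul, Finset.sum_const, nsmul_eq_mul]
  ring

theorem exists_vertex_removal_decreasing_avi {V : Type*} [Fintype V] [Nonempty V]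
    (G : SimpleGraph V) :
    ∃ v : V, avi (G.induce {u | u ≠ v}) < avi G := by
  by_contra h
  push_neg at h
  set A := indepSets G with hA
  obtain ⟨v₀⟩ := ‹Nonempty V›
  have hempty : ∅ ∈ A := by simp [hA, indepSets]
  have hsingle : {v₀} ∈ A := by
    simp only [hA, indepSets, mem_filter, mem_univ, true_and, Finset.mem_singleton]
    intro u hu w hw
    subst hu; subst hw
    exact G.loopless.irrefl _
  have hIpos : (0:ℝ) < A.card := by
    exact_mod_cast Finset.card_pos.2 ⟨∅, hempty⟩
  set n : ℝ := (Fintype.card V : ℝ)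
  set T : ℝ := ∑ s ∈ A, (s.card : ℝ) with hT
  set Q : ℝ := ∑ s ∈ A, (s.card : ℝ)^2 with hQ
  -- per-vertex inequality
  have hineq : ∀ v : V, T * ((A.filter (fun s => v ∉ s)).card : ℝ)
      ≤ (∑ s ∈ A.filter (fun s => v ∉ s), (s.card : ℝ)) * A.card := by
    intro v
    have hv := h v
    have hIv : (0:ℝ) < ((A.filter (fun s => v ∉ s)).card : ℝ) := by
      exact_mod_cast Finset.card_pos.2 ⟨∅, by simp [hempty]⟩
    rw [avi, avi, aux_numIndep, aux_totIndep, numIndep, ← hA,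
      div_le_div_iff₀ hIpos hIv] at hv
    have hTcast : ((totIndep G : ℕ) : ℝ) = T := by
      rw [totIndep, hT, hA]; push_cast; rfl
    have hTvcast : ((∑ s ∈ A.filter (fun s => v ∉ s), s.card : ℕ) : ℝ)
        = ∑ s ∈ A.filter (fun s => v ∉ s), (s.card : ℝ) := by push_cast; rfl
    rw [hTcast, hTvcast] at hv
    exact hv
  -- sum over all vertices
  have hsum : T * (∑ v : V, ((A.filter (fun s => v ∉ s)).card : ℝ))
      ≤ (∑ v : V, ∑ s ∈ A.filter (fun s => v ∉ s), (s.card : ℝ)) * A.card := by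
    rw [Finset.mul_sum, Finset.sum_mul]
    exact Finset.sum_le_sum fun v _ => hineq v
  -- evaluate the two double sums
  have hcompl : ∀ s : Finset V, s ∈ A →
      ((univ.filter (fun v : V => v ∉ s)).card : ℝ) = n - s.card := by
    intro s _
    have h2 : (univ.filter (fun v : V => v ∉ s)) = sᶜ := by ext x; simp
    rw [h2, Finset.card_compl, Nat.cast_sub (Finset.card_le_univ s)]
  have hS1 : ∑ v : V, ((A.filter (fun s => v ∉ s)).card : ℝ) = ∑ s ∈ A, (n - s.card) := by
    have h1 : ∀ v : V, ((A.filter (fun s => v ∉ s)).card : ℝ)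
        = ∑ s ∈ A, if v ∉ s then (1:ℝ) else 0 := by
      intro v; rw [Finset.card_filter]; push_cast; simp
    simp only [h1]
    rw [Finset.sum_comm]
    refine Finset.sum_congr rfl fun s hs => ?_
    rw [← Finset.sum_filter, Finset.sum_const, nsmul_eq_mul, mul_one]
    exact hcompl s hs
  have hS2 : ∑ v : V, ∑ s ∈ A.filter (fun s => v ∉ s), (s.card : ℝ)
      = ∑ s ∈ A, (s.card : ℝ) * (n - s.card) := by
    have h1 : ∀ v : V, ∑ s ∈ A.filter (fun s => v ∉ s), (s.card : ℝ)
        = ∑ s ∈ A, if v ∉ s then (s.card : ℝ) else 0 := by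
      intro v; rw [Finset.sum_filter]
    simp only [h1]
    rw [Finset.sum_comm]
    refine Finset.sum_congr rfl fun s hs => ?_
    rw [← Finset.sum_filter, Finset.sum_const, nsmul_eq_mul, hcompl s hs]
    ring
  rw [hS1, hS2] at hsum
  have e1 : ∑ s ∈ A, (n - (s.card : ℝ)) = n * A.card - T := by
    rw [Finset.sum_sub_distrib, Finset.sum_const, nsmul_eq_mul, hT]; ring
  have e2 : ∑ s ∈ A, (s.card : ℝ) * (n - s.card) = n * T - Q := by
    rw [hT, hQ, Finset.mul_sum, ← Finset.sum_sub_distrib]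
    refine Finset.sum_congr rfl fun s _ => ?_
    ring
  rw [e1, e2] at hsum
  -- hsum : T * (n * I - T) ≤ (n * T - Q) * I, i.e. Q * I ≤ T ^ 2
  have hkey : Q * A.card ≤ T ^ 2 := by nlinarith [hsum]
  -- strict Cauchy–Schwarz: T^2 < Q * I
  have hpos : (0:ℝ) < ∑ s ∈ A, ∑ t ∈ A, ((s.card : ℝ) - t.card)^2 := by
    refine Finset.sum_pos' (fun s _ => Finset.sum_nonneg fun t _ => sq_nonneg _) ?_
    refine ⟨∅, hempty, ?_⟩
    refine Finset.sum_pos' (fun t _ => sq_nonneg _) ⟨{v₀}, hsingle, ?_⟩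
    norm_num
  rw [dbl_sum A (fun s => (s.card : ℝ))] at hpos
  rw [← hT, ← hQ] at hpos
  nlinarith [hpos, hkey]
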